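/- For every θ ∈ ℂ with 0 < Im θ < 2π, the function t ↦ (1/t)·[2·sinh(t(N−1)/N)·cosh(t/N)/sinh²(t)]·(1 − cosh(t(1 − θ/(iπ)))) is integrable on (0,∞), and the function F̂^Z(θ) = exp of this integral is holomorphic (complex differentiable) on the open strip {θ : 0 < Im θ < 2π}. -/

import Mathlib

open Complex MeasureTheory

/-- The integrand of the minimal form factor of the `Z_N`-Ising model:
`(1/t)·[2·sinh(t(N−1)/N)·cosh(t/N)/sinh²(t)]·(1 − cosh(t(1 − θ/(iπ))))`. -/
noncomputable def fZ (N : ℕ) (θ : ℂ) (t : ℝ) : ℂ :=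
  (1 / (t : ℂ)) *
    (2 * Complex.sinh ((t : ℂ) * (N - 1) / N) * Complex.cosh ((t : ℂ) / N) /
      (Complex.sinh (t : ℂ)) ^ 2) *
    (1 - Complex.cosh ((t : ℂ) * (1 - θ / (I * (Real.pi : ℂ)))))

/-- The minimal form factor of the `Z_N`-Ising model (up to normalization). -/
noncomputable def FZhat (N : ℕ) (θ : ℂ) : ℂ :=
  Complex.exp (∫ t in Set.Ioi (0 : ℝ), fZ N θ t)

noncomputable def Complex.abs : AbsoluteValue ℂ ℝ where
  toFun := fun z => ‖z‖
  map_mul' := norm_mul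
  nonneg' := norm_nonneg
  eq_zero' := fun _ => norm_eq_zero
  add_le' := norm_add_le

lemma Complex.norm_eq_abs (z : ℂ) : ‖z‖ = Complex.abs z := rfl

lemma Complex.abs_two : Complex.abs 2 = 2 := by
  simp [Complex.abs]

lemma Complex.abs_I : Complex.abs I = 1 := by
  simp [Complex.abs]

lemma Complex.abs_ofReal (x : ℝ) : Complex.abs (x : ℂ) = |x| := by
  simp [Complex.abs]

lemma Complex.abs_exp (z : ℂ) : Complex.abs (Complex.exp z) = Real.exp z.re := by
  simp [Complex.abs, Complex.norm_exp]

lemma Complex.abs_exp_sub_one_le {x : ℂ} (hx : Complex.abs x ≤ 1) :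
    Complex.abs (Complex.exp x - 1) ≤ 2 * Complex.abs x :=
  Complex.norm_exp_sub_one_le hx

lemma Complex.abs_exp_sub_one_sub_id_le {x : ℂ} (hx : Complex.abs x ≤ 1) :
    Complex.abs (Complex.exp x - 1 - x) ≤ Complex.abs x ^ 2 :=
  Complex.norm_exp_sub_one_sub_id_le hx

lemma Complex.abs_re_le_abs (z : ℂ) : |z.re| ≤ Complex.abs z :=
  Complex.abs_re_le_norm z

lemma cabs_sub_le (x y : ℂ) : Complex.abs (x - y) ≤ Complex.abs x + Complex.abs y := by
  simpa [sub_eq_add_neg] using Complex.abs.add_le x (-y)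

lemma abs_cosh_le (w : ℂ) : Complex.abs (Complex.cosh w) ≤ Real.cosh w.re := by
  rw [Complex.cosh, Real.cosh_eq, map_div₀, Complex.abs_two]
  have := Complex.abs.add_le (Complex.exp w) (Complex.exp (-w))
  rw [Complex.abs_exp, Complex.abs_exp, Complex.neg_re] at this
  linarith

lemma abs_sinh_le (w : ℂ) : Complex.abs (Complex.sinh w) ≤ Real.cosh w.re := by
  rw [Complex.sinh, Real.cosh_eq, map_div₀, Complex.abs_two]
  have := cabs_sub_le (Complex.exp w) (Complex.exp (-w))
  rw [Complex.abs_exp, Complex.abs_exp, Complex.neg_re] at this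
  linarith

lemma abs_sinh_le_two_mul (w : ℂ) (h : Complex.abs w ≤ 1) :
    Complex.abs (Complex.sinh w) ≤ 2 * Complex.abs w := by
  have h1 := Complex.abs_exp_sub_one_le h
  have h2 : Complex.abs (Complex.exp (-w) - 1) ≤ 2 * Complex.abs w := by
    simpa using Complex.abs_exp_sub_one_le (x := -w) (by simpa using h)
  rw [Complex.sinh, show Complex.exp w - Complex.exp (-w)
      = (Complex.exp w - 1) - (Complex.exp (-w) - 1) by ring, map_div₀, Complex.abs_two]
  have := (cabs_sub_le (Complex.exp w - 1) (Complex.exp (-w) - 1)).trans (add_le_add h1 h2)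
  linarith

lemma abs_cosh_sub_one_le (w : ℂ) (h : Complex.abs w ≤ 1) :
    Complex.abs (Complex.cosh w - 1) ≤ Complex.abs w ^ 2 := by
  have h1 := Complex.abs_exp_sub_one_sub_id_le h
  have h2 : Complex.abs (Complex.exp (-w) - 1 + w) ≤ Complex.abs w ^ 2 := by
    simpa using Complex.abs_exp_sub_one_sub_id_le (x := -w) (by simpa using h)
  rw [show Complex.cosh w - 1 = ((Complex.exp w - 1 - w) + (Complex.exp (-w) - 1 + w)) / 2 by
    rw [Complex.cosh]; ring, map_div₀, Complex.abs_two]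
  have := (Complex.abs.add_le (Complex.exp w - 1 - w) (Complex.exp (-w) - 1 + w)).trans
    (add_le_add h1 h2)
  linarith

lemma Real.cosh_le_exp' {x : ℝ} (hx : 0 ≤ x) : Real.cosh x ≤ Real.exp x := by
  rw [Real.cosh_eq]
  have : Real.exp (-x) ≤ Real.exp x := Real.exp_le_exp.2 (by linarith)
  linarith

noncomputable def gZ (N : ℕ) (t : ℝ) : ℂ :=
  (1 / (t : ℂ)) *
    (2 * Complex.sinh ((t : ℂ) * (N - 1) / N) * Complex.cosh ((t : ℂ) / N) /
      (Complex.sinh (t : ℂ)) ^ 2)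

section
variable {N : ℕ} {t : ℝ}

lemma arg1_eq (N : ℕ) (t : ℝ) :
    (t : ℂ) * ((N : ℂ) - 1) / (N : ℂ) = ((t * ((N : ℝ) - 1) / (N : ℝ) : ℝ) : ℂ) := by
  push_cast; ring

lemma arg2_eq (N : ℕ) (t : ℝ) : (t : ℂ) / (N : ℂ) = ((t / (N : ℝ) : ℝ) : ℂ) := by
  push_cast; ring

lemma gZ_abs (ht : 0 < t) :
    Complex.abs (gZ N t) = (1 / t) *
      (2 * Complex.abs (Complex.sinh ((t : ℂ) * (N - 1) / N)) *
        Complex.abs (Complex.cosh ((t : ℂ) / N)) / (Real.sinh t) ^ 2) := by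
  have hs : Complex.sinh (t : ℂ) = ((Real.sinh t : ℝ) : ℂ) := (Complex.ofReal_sinh t).symm
  rw [gZ, hs]
  simp only [map_mul, map_div₀, map_pow, map_one, Complex.abs_ofReal, Complex.abs_two,
    _root_.abs_of_pos ht, _root_.abs_of_pos (Real.sinh_pos_iff.2 ht)]

lemma gZ_abs_small (hN : 2 ≤ N) (ht : 0 < t) (ht1 : t ≤ 1) :
    Complex.abs (gZ N t) ≤ 4 * Real.cosh 1 / t ^ 2 := by
  have hN0 : (0 : ℝ) < N := by positivity
  have hN1 : (1 : ℝ) ≤ N := by exact_mod_cast Nat.one_le_of_lt hN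
  have hfrac : t * ((N : ℝ) - 1) / N ≤ t := by
    rw [div_le_iff₀ hN0]; nlinarith [ht.le]
  have hfrac0 : 0 ≤ t * ((N : ℝ) - 1) / N :=
    div_nonneg (mul_nonneg ht.le (by linarith)) hN0.le
  have h1 : Complex.abs (Complex.sinh ((t : ℂ) * (N - 1) / N)) ≤ 2 * t := by
    rw [arg1_eq N]
    calc Complex.abs (Complex.sinh ((t * ((N : ℝ) - 1) / N : ℝ) : ℂ))
        ≤ 2 * Complex.abs ((t * ((N : ℝ) - 1) / N : ℝ) : ℂ) := by
          apply abs_sinh_le_two_mul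
          rw [Complex.abs_ofReal, _root_.abs_of_nonneg hfrac0]; linarith
      _ ≤ 2 * t := by rw [Complex.abs_ofReal, _root_.abs_of_nonneg hfrac0]; linarith
  have h2 : Complex.abs (Complex.cosh ((t : ℂ) / N)) ≤ Real.cosh 1 := by
    refine (abs_cosh_le _).trans ?_
    rw [arg2_eq, Complex.ofReal_re, Real.cosh_le_cosh]
    have h2' : t / (N : ℝ) ≤ 1 := by
      rw [div_le_one hN0]; linarith
    have h2'' : 0 ≤ t / (N : ℝ) := by positivity
    rw [_root_.abs_of_nonneg h2'', abs_one]; exact h2'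
  have h3 : t ^ 2 ≤ (Real.sinh t) ^ 2 := by
    have := Real.self_le_sinh_iff.2 ht.le
    nlinarith
  rw [gZ_abs ht]
  calc (1 / t) * (2 * Complex.abs (Complex.sinh ((t : ℂ) * (N - 1) / N)) *
        Complex.abs (Complex.cosh ((t : ℂ) / N)) / (Real.sinh t) ^ 2)
      ≤ (1 / t) * (2 * (2 * t) * Real.cosh 1 / t ^ 2) := by
        gcongr
    _ = 4 * Real.cosh 1 / t ^ 2 := by field_simp; ring

lemma gZ_abs_large (hN : 2 ≤ N) (ht : 1 ≤ t) :
    Complex.abs (gZ N t) ≤ 18 * Real.exp (-t) := by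
  have ht0 : (0:ℝ) < t := by linarith
  have hN0 : (0 : ℝ) < N := by positivity
  have hN1 : (1 : ℝ) ≤ N := by exact_mod_cast Nat.one_le_of_lt hN
  have hfrac0 : 0 ≤ t * ((N : ℝ) - 1) / N :=
    div_nonneg (mul_nonneg ht0.le (by linarith)) hN0.le
  have hfrac02 : 0 ≤ t / (N:ℝ) := by positivity
  have h1 : Complex.abs (Complex.sinh ((t : ℂ) * (N - 1) / N)) ≤ Real.exp (t * ((N : ℝ) - 1) / N) := by
    refine (abs_sinh_le _).trans ?_
    rw [arg1_eq N, Complex.ofReal_re]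
    exact Real.cosh_le_exp' hfrac0
  have h2 : Complex.abs (Complex.cosh ((t : ℂ) / N)) ≤ Real.exp (t / (N:ℝ)) := by
    refine (abs_cosh_le _).trans ?_
    rw [arg2_eq, Complex.ofReal_re]
    exact Real.cosh_le_exp' hfrac02
  have hmul : Real.exp (t * ((N : ℝ) - 1) / N) * Real.exp (t / (N:ℝ)) = Real.exp t := by
    rw [← Real.exp_add]
    congr 1
    field_simp
    ring
  have hsinh : Real.exp t / 3 ≤ Real.sinh t := by
    rw [Real.sinh_eq]
    have he2 : (3:ℝ) ≤ Real.exp 2 := by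
      have := Real.add_one_le_exp (2:ℝ); linarith
    have hkey : Real.exp (-t) ≤ Real.exp t / 3 := by
      rw [le_div_iff₀ (by norm_num : (0:ℝ) < 3)]
      calc Real.exp (-t) * 3 ≤ Real.exp (-t) * Real.exp 2 := by
            have := Real.exp_pos (-t); nlinarith
        _ = Real.exp (2 - t) := by rw [← Real.exp_add]; ring_nf
        _ ≤ Real.exp t := Real.exp_le_exp.2 (by linarith)
    linarith
  have hsp : (0:ℝ) < Real.exp t / 3 := by positivity
  rw [gZ_abs ht0]
  calc (1 / t) * (2 * Complex.abs (Complex.sinh ((t : ℂ) * (N - 1) / N)) *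
        Complex.abs (Complex.cosh ((t : ℂ) / N)) / (Real.sinh t) ^ 2)
      ≤ (1 / 1) * (2 * Real.exp (t * ((N : ℝ) - 1) / N) * Real.exp (t / (N:ℝ)) / (Real.exp t / 3) ^ 2) := by
        gcongr
    _ = 18 * Real.exp t / (Real.exp t)^2 := by rw [mul_assoc, hmul]; field_simp; ring
    _ = 18 * Real.exp (-t) := by
        rw [Real.exp_neg]
        have := Real.exp_pos t
        field_simp

end

noncomputable def bnd (M δ : ℝ) (t : ℝ) : ℝ :=
  if t ≤ 1 then 8 * Real.cosh 1 ^ 2 * M ^ 2 else (36 / δ) * Real.exp (-δ * t)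

lemma bnd_integrable {M δ : ℝ} (hδ : 0 < δ) : IntegrableOn (bnd M δ) (Set.Ioi 0) := by
  have h1 : IntegrableOn (bnd M δ) (Set.Ioc 0 1) := by
    have hc : IntegrableOn (fun _ : ℝ => (8 * Real.cosh 1 ^ 2 * M ^ 2 : ℝ)) (Set.Ioc (0:ℝ) 1) :=
      integrableOn_const measure_Ioc_lt_top.ne
    exact hc.congr_fun (fun t ht => by simp [bnd, ht.2]) measurableSet_Ioc
  have h2 : IntegrableOn (bnd M δ) (Set.Ioi 1) := by
    have hc : IntegrableOn (fun t : ℝ => (36 / δ) * Real.exp (-δ * t)) (Set.Ioi (1:ℝ)) :=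
      (exp_neg_integrableOn_Ioi 1 hδ).const_mul (36 / δ)
    exact hc.congr_fun (fun t ht => by
      simp only [Set.mem_Ioi] at ht
      simp [bnd, not_le.2 ht]) measurableSet_Ioi
  have hu : Set.Ioi (0:ℝ) = Set.Ioc 0 1 ∪ Set.Ioi 1 := (Set.Ioc_union_Ioi_eq_Ioi (by norm_num)).symm
  rw [hu]
  exact h1.union h2

section master
variable {N : ℕ} {z : ℂ} {r M t : ℝ}

lemma tz_re (t : ℝ) (z : ℂ) : ((t : ℂ) * z).re = t * z.re := by
  simp [Complex.mul_re]

lemma cosh_arg_le (hzr : |z.re| ≤ r) (ht : 0 ≤ t) : Real.cosh (t * z.re) ≤ Real.exp (t * r) := by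
  calc Real.cosh (t * z.re) = Real.cosh |t * z.re| := (Real.cosh_abs _).symm
    _ ≤ Real.exp |t * z.re| := Real.cosh_le_exp' (abs_nonneg _)
    _ ≤ Real.exp (t * r) := by
        apply Real.exp_le_exp.2
        rw [abs_mul, _root_.abs_of_nonneg ht]
        exact mul_le_mul_of_nonneg_left hzr ht

lemma abs_one_sub_cosh_le (hzr : |z.re| ≤ r) (ht : 0 ≤ t) :
    Complex.abs (1 - Complex.cosh ((t : ℂ) * z)) ≤ 1 + Real.exp (t * r) := by
  have h := abs_cosh_le ((t : ℂ) * z)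
  rw [tz_re] at h
  have h2 := cosh_arg_le hzr ht
  calc Complex.abs (1 - Complex.cosh ((t : ℂ) * z))
      ≤ Complex.abs 1 + Complex.abs (Complex.cosh ((t:ℂ)*z)) := cabs_sub_le _ _
    _ ≤ 1 + Real.exp (t * r) := by rw [map_one]; linarith

lemma exp_decay_step (hr0 : 0 ≤ r) (hr : r < 1) (ht : 0 ≤ t) :
    36 * Real.exp (-(1-r) * t) ≤ (36 / ((1-r)/2)) * Real.exp (-((1-r)/2) * t) := by
  set δ := (1-r)/2 with hδdef
  have hδ : 0 < δ := by simp only [hδdef]; linarith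
  have hδ1 : δ ≤ 1 := by simp only [hδdef]; linarith
  have hsplit : Real.exp (-(1-r) * t) = Real.exp (-δ * t) * Real.exp (-δ * t) := by
    rw [← Real.exp_add, hδdef]; ring_nf
  have he1 : Real.exp (-δ * t) ≤ 1 := Real.exp_le_one_iff.2 (by nlinarith)
  have hep : 0 < Real.exp (-δ * t) := Real.exp_pos _
  have h36 : (36:ℝ) ≤ 36 / δ := by
    rw [le_div_iff₀ hδ]; nlinarith
  calc 36 * Real.exp (-(1-r)*t) = 36 * (Real.exp (-δ*t) * Real.exp (-δ*t)) := by rw [hsplit]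
    _ ≤ 36 * (Real.exp (-δ*t) * 1) := by nlinarith
    _ = 36 * Real.exp (-δ*t) := by ring
    _ ≤ (36/δ) * Real.exp (-δ*t) := by nlinarith

lemma abs_fZ_le (hN : 2 ≤ N) (hzr : |z.re| ≤ r) (hr : r < 1) (hzM : Complex.abs z ≤ M)
    (hM : 1 ≤ M) (ht : 0 < t) :
    Complex.abs (gZ N t * (1 - Complex.cosh ((t : ℂ) * z))) ≤ bnd M ((1 - r) / 2) t := by
  have hr0 : 0 ≤ r := (abs_nonneg _).trans hzr
  have hc1 : (1:ℝ) ≤ Real.cosh 1 := Real.one_le_cosh 1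
  rw [map_mul, bnd]
  by_cases h1 : t ≤ 1
  · rw [if_pos h1]
    by_cases h2 : t * M ≤ 1
    · have habs : Complex.abs ((t:ℂ) * z) ≤ 1 := by
        rw [map_mul, Complex.abs_ofReal, _root_.abs_of_pos ht]
        calc t * Complex.abs z ≤ t * M := by gcongr
          _ ≤ 1 := h2
      have hcosh : Complex.abs (1 - Complex.cosh ((t:ℂ)*z)) ≤ t^2 * M^2 := by
        rw [Complex.abs.map_sub]
        calc Complex.abs (Complex.cosh ((t:ℂ)*z) - 1) ≤ Complex.abs ((t:ℂ)*z) ^ 2 :=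
              abs_cosh_sub_one_le _ habs
          _ ≤ (t * M)^2 := by
              have : Complex.abs ((t:ℂ)*z) ≤ t * M := by
                rw [map_mul, Complex.abs_ofReal, _root_.abs_of_pos ht]; gcongr
              have h0 : 0 ≤ Complex.abs ((t:ℂ)*z) := Complex.abs.nonneg _
              nlinarith
          _ = t^2 * M^2 := by ring
      calc Complex.abs (gZ N t) * Complex.abs (1 - Complex.cosh ((t:ℂ)*z))
          ≤ (4 * Real.cosh 1 / t^2) * (t^2 * M^2) :=
            mul_le_mul (gZ_abs_small hN ht h1) hcosh (Complex.abs.nonneg _) (by positivity)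
        _ = 4 * Real.cosh 1 * M^2 := by field_simp
        _ ≤ 8 * Real.cosh 1 ^ 2 * M^2 := by 
          have hx1 : (0:ℝ) ≤ M ^ 2 * (Real.cosh 1 * (Real.cosh 1 - 1)) :=
            mul_nonneg (sq_nonneg M) (mul_nonneg (by positivity) (by linarith))
          have hx2 : (0:ℝ) ≤ M ^ 2 * Real.cosh 1 := mul_nonneg (sq_nonneg M) (by positivity)
          nlinarith [hx1, hx2]
    · push_neg at h2
      have hcosh : Complex.abs (1 - Complex.cosh ((t:ℂ)*z)) ≤ 2 * Real.cosh 1 := by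
        have h := abs_cosh_le ((t : ℂ) * z)
        rw [tz_re] at h
        have h2' : Real.cosh (t * z.re) ≤ Real.cosh 1 := by
          rw [Real.cosh_le_cosh, abs_one, abs_mul, _root_.abs_of_pos ht]
          calc t * |z.re| ≤ 1 * 1 :=
                mul_le_mul h1 (hzr.trans hr.le) (abs_nonneg _) zero_le_one
            _ = 1 := by norm_num
        calc Complex.abs (1 - Complex.cosh ((t:ℂ)*z))
            ≤ Complex.abs 1 + Complex.abs (Complex.cosh ((t:ℂ)*z)) := cabs_sub_le _ _
          _ ≤ 2 * Real.cosh 1 := by rw [map_one]; linarith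
      have hinv : 1 / t^2 ≤ M^2 := by
        rw [div_le_iff₀ (by positivity)]
        nlinarith
      calc Complex.abs (gZ N t) * Complex.abs (1 - Complex.cosh ((t:ℂ)*z))
          ≤ (4 * Real.cosh 1 / t^2) * (2 * Real.cosh 1) :=
            mul_le_mul (gZ_abs_small hN ht h1) hcosh (Complex.abs.nonneg _) (by positivity)
        _ = (8 * Real.cosh 1 ^ 2) * (1 / t^2) := by ring
        _ ≤ (8 * Real.cosh 1 ^ 2) * M^2 := by
            apply mul_le_mul_of_nonneg_left hinv
            positivity
  · rw [if_neg h1]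
    push_neg at h1
    calc Complex.abs (gZ N t) * Complex.abs (1 - Complex.cosh ((t:ℂ)*z))
        ≤ (18 * Real.exp (-t)) * (1 + Real.exp (t * r)) :=
          mul_le_mul (gZ_abs_large hN h1.le) (abs_one_sub_cosh_le hzr (by linarith))
            (Complex.abs.nonneg _) (by positivity)
      _ ≤ (18 * Real.exp (-t)) * (2 * Real.exp (t * r)) := by
          have : (1:ℝ) ≤ Real.exp (t * r) := Real.one_le_exp_iff.2 (by positivity)
          nlinarith [Real.exp_pos (-t), Real.exp_pos (t*r)]
      _ = 36 * Real.exp (-(1-r) * t) := by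
          have hee : Real.exp (-t) * Real.exp (t*r) = Real.exp (-(1-r)*t) := by
            rw [← Real.exp_add]; ring_nf
          rw [← hee]; ring
      _ ≤ (36 / ((1-r)/2)) * Real.exp (-((1-r)/2) * t) :=
          exp_decay_step hr0 hr (by linarith)

end master

noncomputable def fZ' (N : ℕ) (θ : ℂ) (t : ℝ) : ℂ :=
  gZ N t * ((t : ℂ) / (I * (Real.pi : ℂ)) *
    Complex.sinh ((t : ℂ) * (1 - θ / (I * (Real.pi : ℂ)))))

section master2
variable {N : ℕ} {z : ℂ} {r M t : ℝ}

lemma abs_fZ'_le (hN : 2 ≤ N) (hzr : |z.re| ≤ r) (hr : r < 1) (hzM : Complex.abs z ≤ M)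
    (hM : 1 ≤ M) (ht : 0 < t) :
    Complex.abs (gZ N t * ((t : ℂ) / (I * (Real.pi : ℂ)) * Complex.sinh ((t : ℂ) * z)))
      ≤ bnd M ((1 - r) / 2) t := by
  have hr0 : 0 ≤ r := (abs_nonneg _).trans hzr
  have hc1 : (1:ℝ) ≤ Real.cosh 1 := Real.one_le_cosh 1
  have hπ3 : (3:ℝ) < Real.pi := Real.pi_gt_three
  have hπ0 : (0:ℝ) < Real.pi := Real.pi_pos
  have habsfac : Complex.abs ((t : ℂ) / (I * (Real.pi : ℂ))) = t / Real.pi := by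
    rw [map_div₀, map_mul, Complex.abs_I, Complex.abs_ofReal, Complex.abs_ofReal,
      _root_.abs_of_pos ht, _root_.abs_of_pos hπ0, one_mul]
  rw [map_mul, map_mul, habsfac, bnd]
  by_cases h1 : t ≤ 1
  · rw [if_pos h1]
    by_cases h2 : t * M ≤ 1
    · have habs : Complex.abs ((t:ℂ) * z) ≤ 1 := by
        rw [map_mul, Complex.abs_ofReal, _root_.abs_of_pos ht]
        calc t * Complex.abs z ≤ t * M := by gcongr
          _ ≤ 1 := h2
      have hsinh : Complex.abs (Complex.sinh ((t:ℂ)*z)) ≤ 2 * (t * M) := by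
        calc Complex.abs (Complex.sinh ((t:ℂ)*z)) ≤ 2 * Complex.abs ((t:ℂ)*z) :=
              abs_sinh_le_two_mul _ habs
          _ ≤ 2 * (t * M) := by
              rw [map_mul, Complex.abs_ofReal, _root_.abs_of_pos ht]
              gcongr
      calc Complex.abs (gZ N t) * (t / Real.pi * Complex.abs (Complex.sinh ((t:ℂ)*z)))
          ≤ (4 * Real.cosh 1 / t^2) * (t / Real.pi * (2 * (t * M))) := by
            apply mul_le_mul (gZ_abs_small hN ht h1) _ (by positivity) (by positivity)
            apply mul_le_mul_of_nonneg_left hsinh (by positivity)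
        _ = 8 * Real.cosh 1 * M / Real.pi := by field_simp; ring
        _ ≤ 8 * Real.cosh 1 * M := by
            apply div_le_self (by positivity) (by linarith)
        _ ≤ 8 * Real.cosh 1 ^ 2 * M ^ 2 := by
            have hcm : (1:ℝ) ≤ Real.cosh 1 * M := by nlinarith
            have h0 : (0:ℝ) ≤ Real.cosh 1 * M := by positivity
            nlinarith [mul_nonneg h0 (by linarith : (0:ℝ) ≤ Real.cosh 1 * M - 1)]
    · push_neg at h2
      have hsinh : Complex.abs (Complex.sinh ((t:ℂ)*z)) ≤ Real.cosh 1 := by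
        refine (abs_sinh_le _).trans ?_
        rw [tz_re, Real.cosh_le_cosh, abs_one, abs_mul, _root_.abs_of_pos ht]
        calc t * |z.re| ≤ 1 * 1 := mul_le_mul h1 (hzr.trans hr.le) (abs_nonneg _) zero_le_one
          _ = 1 := by norm_num
      calc Complex.abs (gZ N t) * (t / Real.pi * Complex.abs (Complex.sinh ((t:ℂ)*z)))
          ≤ (4 * Real.cosh 1 / t^2) * (t / Real.pi * Real.cosh 1) := by
            apply mul_le_mul (gZ_abs_small hN ht h1) _ (by positivity) (by positivity)
            apply mul_le_mul_of_nonneg_left hsinh (by positivity)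
        _ = 4 * Real.cosh 1 ^2 * (1 / (t * Real.pi)) := by field_simp
        _ ≤ 4 * Real.cosh 1 ^2 * M := by
            have : 1 / (t * Real.pi) ≤ M := by
              rw [div_le_iff₀ (by positivity)]
              nlinarith
            apply mul_le_mul_of_nonneg_left this (by positivity)
        _ ≤ 8 * Real.cosh 1 ^ 2 * M ^ 2 := by
            have h0 : (0:ℝ) ≤ Real.cosh 1 ^ 2 * M := by positivity
            nlinarith [mul_nonneg h0 (by linarith : (0:ℝ) ≤ M - 1)]
  · rw [if_neg h1]
    push_neg at h1
    set δ := (1-r)/2 with hδdef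
    have hδ : 0 < δ := by simp only [hδdef]; linarith
    have ht0 : (0:ℝ) < t := by linarith
    have hsinh : Complex.abs (Complex.sinh ((t:ℂ)*z)) ≤ Real.exp (t * r) := by
      refine (abs_sinh_le _).trans ?_
      rw [tz_re]
      exact cosh_arg_le hzr ht0.le
    have htexp : t ≤ Real.exp (δ * t) / δ := by
      rw [le_div_iff₀ hδ]
      have := Real.add_one_le_exp (δ * t)
      nlinarith
    calc Complex.abs (gZ N t) * (t / Real.pi * Complex.abs (Complex.sinh ((t:ℂ)*z)))
        ≤ (18 * Real.exp (-t)) * (t / Real.pi * Real.exp (t * r)) := by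
          apply mul_le_mul (gZ_abs_large hN h1.le) _ (by positivity) (by positivity)
          apply mul_le_mul_of_nonneg_left hsinh (by positivity)
      _ ≤ (18 * Real.exp (-t)) * (t * Real.exp (t * r)) := by
          have h3 : t / Real.pi ≤ t := div_le_self ht0.le (by linarith)
          have := Real.exp_pos (t*r)
          have := Real.exp_pos (-t)
          apply mul_le_mul_of_nonneg_left _ (by positivity)
          apply mul_le_mul_of_nonneg_right h3 (by positivity)
      _ ≤ (18 * Real.exp (-t)) * ((Real.exp (δ * t) / δ) * Real.exp (t * r)) := by
          apply mul_le_mul_of_nonneg_left _ (by positivity)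
          apply mul_le_mul_of_nonneg_right htexp (by positivity)
      _ = (18 / δ) * (Real.exp (-t) * Real.exp (δ * t) * Real.exp (t * r)) := by
          field_simp
      _ = (18 / δ) * Real.exp (-δ * t) := by
          rw [← Real.exp_add, ← Real.exp_add]
          congr 1
          simp only [hδdef]
          ring
      _ ≤ (36 / δ) * Real.exp (-δ * t) := by
          have h9 : 18 / δ ≤ 36 / δ := by gcongr <;> norm_num
          exact mul_le_mul_of_nonneg_right h9 (Real.exp_pos _).le

end master2

lemma fZ_meas (N : ℕ) (θ : ℂ) : AEStronglyMeasurable (fZ N θ) (volume.restrict (Set.Ioi 0)) := by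
  apply Measurable.aestronglyMeasurable
  unfold fZ
  fun_prop

lemma fZ'_meas (N : ℕ) (θ : ℂ) : AEStronglyMeasurable (fZ' N θ) (volume.restrict (Set.Ioi 0)) := by
  apply Measurable.aestronglyMeasurable
  unfold fZ' gZ
  fun_prop

lemma z_re_eq (θ : ℂ) : (1 - θ / (I * (Real.pi : ℂ))).re = 1 - θ.im / Real.pi := by
  have hπ : ((Real.pi : ℂ)) ≠ 0 := Complex.ofReal_ne_zero.2 Real.pi_ne_zero
  have h : θ / (I * (Real.pi : ℂ)) = -(θ * I) / ((Real.pi : ℂ)) := by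
    rw [div_eq_div_iff (mul_ne_zero Complex.I_ne_zero hπ) hπ]
    have : I * I = -1 := Complex.I_mul_I
    ring_nf
    rw [Complex.I_sq]
    ring
  rw [Complex.sub_re, Complex.one_re, h, neg_div, Complex.neg_re, Complex.div_ofReal_re,
    Complex.mul_I_re]
  ring

lemma hasDerivAt_fZ (N : ℕ) (t : ℝ) (θ : ℂ) :
    HasDerivAt (fun θ' => fZ N θ' t) (fZ' N θ t) θ := by
  have h1 : HasDerivAt (fun θ' : ℂ => (1 : ℂ) - θ' / (I * (Real.pi : ℂ)))
      (-(1 / (I * (Real.pi : ℂ)))) θ := by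
    simpa using ((hasDerivAt_id θ).div_const (I * (Real.pi : ℂ))).const_sub (1 : ℂ)
  have h2 := (h1.const_mul ((t : ℂ))).ccosh
  have h3 := (h2.const_sub 1).const_mul (gZ N t)
  have heq : fZ' N θ t =
      gZ N t * -(Complex.sinh ((t:ℂ) * (1 - θ / (I * (Real.pi : ℂ)))) *
        ((t:ℂ) * -(1 / (I * (Real.pi : ℂ))))) := by
    simp only [fZ']
    ring
  rw [heq]
  exact h3

lemma integrable_fZ {N : ℕ} (hN : 2 ≤ N) (θ : ℂ) (h1 : 0 < θ.im) (h2 : θ.im < 2 * Real.pi) :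
    IntegrableOn (fZ N θ) (Set.Ioi 0) := by
  set z : ℂ := 1 - θ / (I * (Real.pi : ℂ)) with hz
  have hπ0 := Real.pi_pos
  have hr : |z.re| < 1 := by
    rw [abs_lt, hz, z_re_eq θ]
    constructor
    · have : θ.im / Real.pi < 2 := by rw [div_lt_iff₀ hπ0]; linarith
      linarith
    · have : 0 < θ.im / Real.pi := div_pos h1 hπ0
      linarith
  have hδ : (0:ℝ) < (1 - |z.re|) / 2 := by linarith
  apply Integrable.mono' (bnd_integrable hδ (M := max (Complex.abs z) 1)) (fZ_meas N θ)
  rw [ae_restrict_iff' measurableSet_Ioi]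
  filter_upwards with t ht
  rw [Set.mem_Ioi] at ht
  have key := abs_fZ_le hN (le_refl |z.re|) hr (le_max_left _ _) (le_max_right _ _) ht
  have hfz : fZ N θ t = gZ N t * (1 - Complex.cosh ((t : ℂ) * z)) := by
    simp only [fZ, gZ, hz]
  rw [hfz, Complex.norm_eq_abs]
  exact key

lemma hasDerivAt_integral_fZ {N : ℕ} (hN : 2 ≤ N) (θ₀ : ℂ) (h1 : 0 < θ₀.im)
    (h2 : θ₀.im < 2 * Real.pi) :
    HasDerivAt (fun θ => ∫ t in Set.Ioi (0:ℝ), fZ N θ t)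
      (∫ t in Set.Ioi (0:ℝ), fZ' N θ₀ t) θ₀ := by
  have hπ0 := Real.pi_pos
  set z₀ : ℂ := 1 - θ₀ / (I * (Real.pi : ℂ)) with hz₀
  have hr₀ : |z₀.re| < 1 := by
    rw [abs_lt, hz₀, z_re_eq θ₀]
    constructor
    · have : θ₀.im / Real.pi < 2 := by rw [div_lt_iff₀ hπ0]; linarith
      linarith
    · have : 0 < θ₀.im / Real.pi := div_pos h1 hπ0
      linarith
  set r₀ : ℝ := |z₀.re| with hr₀def
  have hr₀0 : 0 ≤ r₀ := abs_nonneg _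
  set r : ℝ := (1 + r₀) / 2 with hrdef
  have hr : r < 1 := by rw [hrdef]; linarith
  set M : ℝ := Complex.abs z₀ + 1 with hMdef
  have hM : 1 ≤ M := by
    have := Complex.abs.nonneg z₀
    rw [hMdef]; linarith
  set ε : ℝ := Real.pi * ((1 - r₀) / 2) with hεdef
  have hε : 0 < ε := by
    rw [hεdef]; apply mul_pos hπ0; linarith
  have hδ : (0:ℝ) < (1 - r) / 2 := by linarith
  have hball : ∀ θ ∈ Metric.ball θ₀ ε,
      |(1 - θ / (I * (Real.pi : ℂ))).re| ≤ r ∧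
        Complex.abs (1 - θ / (I * (Real.pi : ℂ))) ≤ M := by
    intro θ hθ
    set z : ℂ := 1 - θ / (I * (Real.pi : ℂ)) with hz
    have hdiffabs : Complex.abs (z - z₀) < (1 - r₀) / 2 := by
      have hzz : z - z₀ = (θ₀ - θ) / (I * (Real.pi : ℂ)) := by
        rw [hz, hz₀]
        ring
      rw [hzz, map_div₀, map_mul, Complex.abs_I, Complex.abs_ofReal, one_mul,
        _root_.abs_of_pos hπ0]
      rw [Metric.mem_ball, Complex.dist_eq] at hθ
      rw [div_lt_iff₀ hπ0]
      calc Complex.abs (θ₀ - θ) = Complex.abs (θ - θ₀) := Complex.abs.map_sub _ _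
        _ < ε := hθ
        _ = (1 - r₀) / 2 * Real.pi := by rw [hεdef]; ring
    constructor
    · have h1' : |z.re - z₀.re| ≤ Complex.abs (z - z₀) := by
        calc |z.re - z₀.re| = |(z - z₀).re| := by simp [Complex.sub_re]
          _ ≤ Complex.abs (z - z₀) := Complex.abs_re_le_abs _
      calc |z.re| ≤ |z₀.re| + |z.re - z₀.re| := by
            have := abs_sub_abs_le_abs_sub z.re z₀.re
            have := abs_sub (z.re) (z₀.re)
            calc |z.re| = |z₀.re + (z.re - z₀.re)| := by congr 1; ring
              _ ≤ |z₀.re| + |z.re - z₀.re| := abs_add_le _ _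
        _ ≤ r₀ + (1 - r₀) / 2 := by
            have := h1'.trans hdiffabs.le
            rw [hr₀def]
            linarith
        _ = r := by rw [hrdef]; ring
    · calc Complex.abs z = Complex.abs (z₀ + (z - z₀)) := by congr 1; ring
        _ ≤ Complex.abs z₀ + Complex.abs (z - z₀) := Complex.abs.add_le _ _
        _ ≤ Complex.abs z₀ + (1 - r₀) / 2 := by linarith [hdiffabs.le]
        _ ≤ M := by rw [hMdef]; linarith
  have key := hasDerivAt_integral_of_dominated_loc_of_deriv_le
    (μ := volume.restrict (Set.Ioi (0:ℝ))) (F := fun θ t => fZ N θ t)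
    (F' := fun θ t => fZ' N θ t) (x₀ := θ₀) (bound := bnd M ((1 - r) / 2)) (Metric.ball_mem_nhds θ₀ hε)
    (Filter.Eventually.of_forall fun θ => fZ_meas N θ)
    (integrable_fZ hN θ₀ h1 h2) (fZ'_meas N θ₀) ?_ (bnd_integrable hδ) ?_
  · exact key.2
  · rw [ae_restrict_iff' measurableSet_Ioi]
    filter_upwards with t ht θ hθ
    rw [Set.mem_Ioi] at ht
    obtain ⟨hzr, hzM⟩ := hball θ hθ
    have := abs_fZ'_le hN hzr hr hzM hM ht
    simpa only [fZ', Complex.norm_eq_abs] using this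
  · apply Filter.Eventually.of_forall
    intro t θ _
    exact hasDerivAt_fZ N t θ

theorem FZhat_integrable_and_holomorphic (N : ℕ) (hN : 2 ≤ N) :
    (∀ θ : ℂ, 0 < θ.im → θ.im < 2 * Real.pi → IntegrableOn (fZ N θ) (Set.Ioi 0)) ∧
    DifferentiableOn ℂ (FZhat N) {θ : ℂ | 0 < θ.im ∧ θ.im < 2 * Real.pi} := by
  constructor
  · intro θ h1 h2
    exact integrable_fZ hN θ h1 h2
  · intro θ₀ hθ₀
    obtain ⟨h1, h2⟩ := hθ₀
    have hd := hasDerivAt_integral_fZ hN θ₀ h1 h2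
    have hde := hd.cexp
    exact hde.differentiableAt.differentiableWithinAt
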